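/- Suppose there exist positive numbers c_n → ∞ and a distribution function G(x), x ≥ 0, such that lim_{n→∞} sup_{t ≥ 0} |P(γ_{n,2}⁺(t) < τ'_{n,⌊c_n x⌋}) − G(x)| = 0 for every continuity point x > 0 of G, where τ'_{n,m} denotes a sum of m i.i.d. copies of η_{n,1} independent of Z_n. Then for every fixed l ∈ ℕ and every continuity point x > 0 of G, P(ξ_n(l) ≤ c_n x) → G(x) as n → ∞. -/

import Mathlib

open MeasureTheory ProbabilityTheory Filter
open scoped ENNReal

noncomputable section

/-- Partial sums `f 1 + ⋯ + f i` (so `psum f 0 = 0`). -/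
def psum {Ω : Type*} (f : ℕ → Ω → ℝ) (i : ℕ) (ω : Ω) : ℝ :=
  ∑ l ∈ Finset.Icc 1 i, f l ω

/-- The forward recurrence time `γ₂⁺(t) = ϑ_{N₂(t)+1} − t`, where
`N₂(t) = sup{m ≥ 0 : ϑ_m < t}` and `ϑ_m = ζ₁ + ⋯ + ζ_m`. -/
def fwdTime {Ω : Type*} (ζ : ℕ → Ω → ℝ) (t : ℝ) (ω : Ω) : ℝ :=
  psum ζ (sSup {m : ℕ | psum ζ m ω < t} + 1) ω - t

/-- `τ_i` is marked by `Z`: some renewal point `ϑ_j` of `Z` lies in `(τ_{i−1}, τ_i]`. -/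
def marked {Ω : Type*} (η ζ : ℕ → Ω → ℝ) (i : ℕ) (ω : Ω) : Prop :=
  ∃ j, 1 ≤ j ∧ psum η (i - 1) ω < psum ζ j ω ∧ psum ζ j ω ≤ psum η i ω

/-- `ξ(l) = min{j ≥ 1 : χ(l+j) = 1}`. -/
def markXi {Ω : Type*} (η ζ : ℕ → Ω → ℝ) (l : ℕ) (ω : Ω) : ℕ :=
  sInf {j : ℕ | 1 ≤ j ∧ marked η ζ (l + j) ω}


namespace MarkAux

variable {Ω : Type*}

lemma psum_succ (f : ℕ → Ω → ℝ) (m : ℕ) (ω : Ω) :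
    psum f (m + 1) ω = psum f m ω + f (m + 1) ω := by
  unfold psum
  rw [Finset.sum_Icc_succ_top (by omega : 1 ≤ m + 1)]

lemma psum_zero (f : ℕ → Ω → ℝ) (ω : Ω) : psum f 0 ω = 0 := by
  simp [psum]

lemma psum_mono {f : ℕ → Ω → ℝ} (hf : ∀ i ω, 0 < f i ω) (ω : Ω) :
    Monotone fun m => psum f m ω := by
  apply monotone_nat_of_le_succ
  intro m
  rw [psum_succ]
  linarith [hf (m+1) ω]

lemma psum_strictMono {f : ℕ → Ω → ℝ} (hf : ∀ i ω, 0 < f i ω) (ω : Ω) :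
    StrictMono fun m => psum f m ω := by
  apply strictMono_nat_of_lt_succ
  intro m
  rw [psum_succ]
  linarith [hf (m+1) ω]

lemma psum_nonneg {f : ℕ → Ω → ℝ} (hf : ∀ i ω, 0 < f i ω) (m : ℕ) (ω : Ω) :
    0 ≤ psum f m ω := by
  have := psum_mono hf ω (Nat.zero_le m)
  simpa [psum_zero] using this

lemma psum_pos {f : ℕ → Ω → ℝ} (hf : ∀ i ω, 0 < f i ω) {m : ℕ} (hm : 1 ≤ m) (ω : Ω) :
    0 < psum f m ω := by
  have := psum_strictMono hf ω (show 0 < m from hm)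
  simpa [psum_zero] using this

/-- characterization of `sSup` on `ℕ`. -/
lemma nat_sSup_eq_iff {s : Set ℕ} {k : ℕ} :
    sSup s = k ↔ ((∀ a ∈ s, a ≤ k) ∧ (k = 0 ∨ k ∈ s)) ∨ (k = 0 ∧ ∀ n, ∃ a ∈ s, n < a) := by
  constructor
  · rintro rfl
    by_cases hb : BddAbove s
    · rcases Set.eq_empty_or_nonempty s with rfl | hne
      · left
        constructor
        · intro a ha; exact absurd ha (Set.notMem_empty a)
        · left
          simpa using (csSup_empty : sSup (∅ : Set ℕ) = ⊥)
      · exact Or.inl ⟨fun a ha => le_csSup hb ha, Or.inr (Nat.sSup_mem hne hb)⟩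
    · right
      have hinf : s.Infinite := by
        by_contra hfin
        exact hb (Set.Finite.bddAbove (Set.not_infinite.mp hfin))
      refine ⟨Set.Infinite.Nat.sSup_eq_zero hinf, fun n => ?_⟩
      by_contra hc
      push_neg at hc
      exact hb ⟨n, fun a ha => hc a ha⟩
  · rintro (⟨hub, hk⟩ | ⟨rfl, hunb⟩)
    · rcases hk with rfl | hk
      · rcases Set.eq_empty_or_nonempty s with rfl | hne
        · simpa using (csSup_empty : sSup (∅ : Set ℕ) = ⊥)
        · exact le_antisymm (csSup_le hne hub) (Nat.zero_le _)
      · exact le_antisymm (csSup_le ⟨k, hk⟩ hub) (le_csSup ⟨k, hub⟩ hk)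
    · have hinf : s.Infinite := by
        apply Set.infinite_of_not_bddAbove
        rintro ⟨n, hn⟩
        obtain ⟨a, ha, hna⟩ := hunb n
        exact absurd (hn ha) (not_le.mpr hna)
      exact Set.Infinite.Nat.sSup_eq_zero hinf

/-- sums of a bare sequence -/
def Zsum (z : ℕ → ℝ) (m : ℕ) : ℝ := ∑ i ∈ Finset.range m, z i

def Phi (z : ℕ → ℝ) (t : ℝ) : ℝ := Zsum z (sSup {m : ℕ | Zsum z m < t} + 1) - t

lemma psum_eq_zsum (f : ℕ → Ω → ℝ) (m : ℕ) (ω : Ω) :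
    psum f m ω = Zsum (fun j => f (j + 1) ω) m := by
  induction m with
  | zero => simp [psum_zero, Zsum]
  | succ m ih => rw [psum_succ, Zsum, Finset.sum_range_succ, ← Zsum, ih]

lemma fwdTime_eq (ζ : ℕ → Ω → ℝ) (t : ℝ) (ω : Ω) :
    fwdTime ζ t ω = Phi (fun j => ζ (j + 1) ω) t := by
  have hset : {m : ℕ | psum ζ m ω < t} = {m : ℕ | Zsum (fun j => ζ (j + 1) ω) m < t} := by
    ext m; simp [psum_eq_zsum]
  rw [fwdTime, Phi, hset, psum_eq_zsum]

lemma measurable_zsum (m : ℕ) : Measurable fun p : (ℕ → ℝ) × ℝ => Zsum p.1 m := by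
  unfold Zsum
  exact Finset.measurable_sum _ fun i _ => (measurable_pi_apply i).comp measurable_fst

lemma measurable_sSupIdx :
    Measurable fun p : (ℕ → ℝ) × ℝ => sSup {m : ℕ | Zsum p.1 m < p.2} := by
  apply measurable_to_countable'
  intro k
  have hA : ∀ m : ℕ, MeasurableSet {p : (ℕ → ℝ) × ℝ | Zsum p.1 m < p.2} := fun m =>
    measurableSet_lt (measurable_zsum m) measurable_snd
  have : (fun p : (ℕ → ℝ) × ℝ => sSup {m : ℕ | Zsum p.1 m < p.2}) ⁻¹' {k} =
      {p : (ℕ → ℝ) × ℝ | ((∀ a, Zsum p.1 a < p.2 → a ≤ k) ∧ (k = 0 ∨ Zsum p.1 k < p.2)) ∨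
        (k = 0 ∧ ∀ n, ∃ a, Zsum p.1 a < p.2 ∧ n < a)} := by
    ext p
    simp only [Set.mem_preimage, Set.mem_singleton_iff, nat_sSup_eq_iff, Set.mem_setOf_eq]
  have h1 : MeasurableSet {p : (ℕ → ℝ) × ℝ | ∀ a, Zsum p.1 a < p.2 → a ≤ k} := by
    rw [Set.setOf_forall]
    refine MeasurableSet.iInter fun a => ?_
    by_cases h : a ≤ k
    · simp only [h, implies_true, Set.setOf_true]; exact MeasurableSet.univ
    · have he : {p : (ℕ → ℝ) × ℝ | Zsum p.1 a < p.2 → a ≤ k} =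
          {p : (ℕ → ℝ) × ℝ | Zsum p.1 a < p.2}ᶜ := by
        ext p; simp [h]
      rw [he]; exact (hA a).compl
  have h2 : MeasurableSet {p : (ℕ → ℝ) × ℝ | k = 0 ∨ Zsum p.1 k < p.2} := by
    rw [Set.setOf_or]
    exact (MeasurableSet.const _).union (hA k)
  have h3 : MeasurableSet {p : (ℕ → ℝ) × ℝ | k = 0 ∧ ∀ n, ∃ a, Zsum p.1 a < p.2 ∧ n < a} := by
    rw [Set.setOf_and, Set.setOf_forall]
    refine (MeasurableSet.const _).inter (MeasurableSet.iInter fun n => ?_)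
    rw [Set.setOf_exists]
    refine MeasurableSet.iUnion fun a => ?_
    rw [Set.setOf_and]
    exact (hA a).inter (MeasurableSet.const _)
  rw [this, Set.setOf_or, Set.setOf_and]
  exact (h1.inter h2).union h3

lemma measurable_phi : Measurable fun p : (ℕ → ℝ) × ℝ => Phi p.1 p.2 := by
  have hF : Measurable fun q : ((ℕ → ℝ) × ℝ) × ℕ => Zsum q.1.1 (q.2 + 1) - q.1.2 := by
    apply measurable_from_prod_countable_left
    intro m
    exact ((measurable_zsum (m + 1)).comp measurable_id).sub measurable_snd
  have := hF.comp (measurable_id.prodMk measurable_sSupIdx)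
  simpa [Phi, Function.comp_def] using this

/-- if the set `{k | ϑ_k < t}` is unbounded then all partial sums are `< t`. -/
lemma all_lt_of_not_bddAbove (hζ : ∀ i ω, 0 < ζ i ω) {ω : Ω} {t : ℝ}
    (h : ¬ BddAbove {k : ℕ | psum ζ k ω < t}) (k : ℕ) : psum ζ k ω < t := by
  have : ∃ a ∈ {k : ℕ | psum ζ k ω < t}, k < a := by
    by_contra hc
    push_neg at hc
    exact h ⟨k, fun a ha => le_of_not_gt fun hlt => absurd (hc a ha) (not_le.mpr hlt)⟩
  obtain ⟨a, ha, hka⟩ := this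
  exact lt_of_le_of_lt (psum_mono hζ ω hka.le) ha

/-- interval splitting -/
lemma exists_marked_index (hη : ∀ i ω, 0 < η i ω) {ω : Ω} {l : ℕ} {v : ℝ} :
    ∀ m : ℕ, psum η l ω < v → v ≤ psum η (l + m) ω →
      ∃ j, 1 ≤ j ∧ j ≤ m ∧ psum η (l + j - 1) ω < v ∧ v ≤ psum η (l + j) ω := by
  intro m
  induction m with
  | zero => intro h1 h2; exact absurd (lt_of_lt_of_le h1 h2) (lt_irrefl _)
  | succ m ih =>
    intro h1 h2
    by_cases hm : v ≤ psum η (l + m) ω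
    · obtain ⟨j, hj1, hj2, hj3, hj4⟩ := ih h1 hm
      exact ⟨j, hj1, hj2.trans (Nat.le_succ m), hj3, hj4⟩
    · push_neg at hm
      refine ⟨m + 1, by omega, le_refl _, ?_, ?_⟩
      · have : l + (m + 1) - 1 = l + m := by omega
        rw [this]; exact hm
      · have : l + (m + 1) = (l + m) + 1 := by omega
        rw [this]; exact h2

/-- a renewal point of Z in `(τ_l, τ_{l+m}]` forces `markXi ≤ m`. -/
lemma markXi_le_of_theta (hη : ∀ i ω, 0 < η i ω) {ω : Ω} {l m : ℕ} {k : ℕ} (hk : 1 ≤ k)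
    (h1 : psum η l ω < psum ζ k ω) (h2 : psum ζ k ω ≤ psum η (l + m) ω) :
    markXi η ζ l ω ≤ m := by
  obtain ⟨j, hj1, hj2, hj3, hj4⟩ := exists_marked_index hη m h1 h2
  have hmem : j ∈ {j : ℕ | 1 ≤ j ∧ marked η ζ (l + j) ω} := by
    refine ⟨hj1, k, hk, ?_, hj4⟩
    have : l + j - 1 = l + j - 1 := rfl
    exact hj3
  exact le_trans (Nat.sInf_le hmem) hj2

/-- LOWER inclusion. -/
lemma lower_incl (hη : ∀ i ω, 0 < η i ω) (hζ : ∀ i ω, 0 < ζ i ω) {ω : Ω} {l m m' : ℕ} (hm : m' + 1 ≤ m)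
    (h : fwdTime ζ (psum η (l + 1) ω) ω
        < psum η ((l + 1) + m') ω - psum η (l + 1) ω) :
    markXi η ζ l ω ≤ m := by
  set t := psum η (l + 1) ω with ht
  have htpos : 0 < t := psum_pos hη (by omega) ω
  by_cases hb : BddAbove {k : ℕ | psum ζ k ω < t}
  · have hne : Set.Nonempty {k : ℕ | psum ζ k ω < t} :=
      ⟨0, by simpa [psum_zero] using htpos⟩
    set N := sSup {k : ℕ | psum ζ k ω < t} with hN
    have hN1 : t ≤ psum ζ (N + 1) ω := by
      by_contra hc
      push_neg at hc
      have : N + 1 ≤ N := le_csSup hb hc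
      omega
    have hfwd : fwdTime ζ t ω = psum ζ (N + 1) ω - t := rfl
    rw [hfwd] at h
    have hlt : psum ζ (N + 1) ω < psum η ((l + 1) + m') ω := by linarith
    have h2 : psum ζ (N + 1) ω ≤ psum η (l + m) ω :=
      le_trans hlt.le (psum_mono hη ω (by omega))
    exact markXi_le_of_theta hη (by omega)
      (lt_of_lt_of_le (psum_strictMono hη ω (by omega : l < l + 1)) hN1) h2
  · have hall := all_lt_of_not_bddAbove hζ hb
    by_cases hex : ∃ k, 1 ≤ k ∧ psum η l ω < psum ζ k ω
    · obtain ⟨k, hk1, hk2⟩ := hex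
      exact markXi_le_of_theta hη hk1 hk2
        (le_trans (hall k).le (psum_mono hη ω (by omega)))
    · push_neg at hex
      have hempty : {j : ℕ | 1 ≤ j ∧ marked η ζ (l + j) ω} = ∅ := by
        ext j
        simp only [Set.mem_setOf_eq, Set.mem_empty_iff_false, iff_false, not_and]
        intro hj1 hmk
        obtain ⟨k, hk1, hk2, _⟩ := hmk
        have : psum ζ k ω ≤ psum η l ω := hex k hk1
        have hll : psum η l ω ≤ psum η (l + j - 1) ω := psum_mono hη ω (by omega)
        linarith
      rw [markXi, hempty, Nat.sInf_empty]
      omega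

/-- UPPER inclusion. -/
lemma upper_incl (hη : ∀ i ω, 0 < η i ω) (hζ : ∀ i ω, 0 < ζ i ω) {ω : Ω} {l m : ℕ} (hS : markXi η ζ l ω ≤ m) :
    fwdTime ζ (psum η l ω) ω < psum η (l + (m + 1)) ω - psum η l ω ∨
    ∀ k, psum η (l + k) ω - psum η l ω ≤ fwdTime ζ (psum η l ω) ω := by
  set t := psum η l ω with ht
  set B := {k : ℕ | psum ζ k ω < t} with hB
  have hfwd : fwdTime ζ t ω = psum ζ (sSup B + 1) ω - t := rfl
  by_cases hSne : Set.Nonempty {j : ℕ | 1 ≤ j ∧ marked η ζ (l + j) ω}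
  · -- minimal marked index is a witness
    have hmem := Nat.sInf_mem hSne
    set j₀ := sInf {j : ℕ | 1 ≤ j ∧ marked η ζ (l + j) ω} with hj₀
    obtain ⟨hj₀1, k', hk'1, hk'2, hk'3⟩ := hmem
    have hj₀m : j₀ ≤ m := hS
    have htk' : t < psum ζ k' ω :=
      lt_of_le_of_lt (psum_mono hη ω (by omega : l ≤ l + j₀ - 1)) hk'2
    have hb : BddAbove B := by
      by_contra hb
      exact absurd (all_lt_of_not_bddAbove hζ hb k') (not_lt.mpr htk'.le)
    left
    set N := sSup B with hN
    have hNk' : N + 1 ≤ k' := by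
      by_contra hc
      push_neg at hc
      have hk'N : k' ≤ N := by omega
      rcases Set.eq_empty_or_nonempty B with hBe | hBne
      · rw [hB] at hBe
        have : N = 0 := by rw [hN, hB, hBe]; exact csSup_empty
        omega
      · have : psum ζ k' ω ≤ psum ζ N ω := psum_mono hζ ω hk'N
        have hNB : N ∈ B := Nat.sSup_mem hBne hb
        rw [hB] at hNB
        have : psum ζ k' ω < t := lt_of_le_of_lt this hNB
        linarith
    have : psum ζ (N + 1) ω ≤ psum ζ k' ω := psum_mono hζ ω hNk'
    have h2 : psum ζ (N + 1) ω ≤ psum η (l + j₀) ω := le_trans this hk'3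
    have h3 : psum η (l + j₀) ω < psum η (l + (m + 1)) ω :=
      psum_strictMono hη ω (by omega)
    rw [hfwd]
    linarith
  · -- no marked index at all
    by_cases hex : ∃ k, 1 ≤ k ∧ t ≤ psum ζ k ω
    · obtain ⟨k₁, hk₁1, hk₁2⟩ := hex
      have hb : BddAbove B := by
        by_contra hb
        exact absurd (all_lt_of_not_bddAbove hζ hb k₁) (not_lt.mpr hk₁2)
      set N := sSup B with hN
      have hN1 : t ≤ psum ζ (N + 1) ω := by
        by_contra hc
        push_neg at hc
        have : N + 1 ∈ B := hc
        have : N + 1 ≤ N := le_csSup hb this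
        omega
      rcases eq_or_lt_of_le hN1 with heq | hlt
      · left
        rw [hfwd, ← heq]
        have : t < psum η (l + (m + 1)) ω := psum_strictMono hη ω (by omega)
        linarith
      · right
        have hallk : ∀ k, psum η (l + k) ω < psum ζ (N + 1) ω := by
          intro k
          induction k with
          | zero => simpa using hlt
          | succ k ihk =>
            by_contra hc
            push_neg at hc
            have hmk : marked η ζ (l + (k + 1)) ω := by
              refine ⟨N + 1, by omega, ?_, ?_⟩
              · have : l + (k + 1) - 1 = l + k := by omega
                rw [this]; exact ihk
              · exact hc
            exact hSne ⟨k + 1, ⟨by omega, hmk⟩⟩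
        intro k
        rw [hfwd]
        have := hallk k
        linarith
    · push_neg at hex
      left
      have hζ1 : 0 < psum ζ 1 ω := psum_pos hζ le_rfl ω
      have ht1 : psum ζ 1 ω < t := hex 1 le_rfl
      have hBall : ∀ k, k ∈ B := by
        intro k
        rcases Nat.eq_zero_or_pos k with rfl | hk
        · show psum ζ 0 ω < t
          rw [psum_zero]; linarith
        · exact hex k hk
      have hb : ¬ BddAbove B := by
        rintro ⟨n, hn⟩
        exact absurd (hn (hBall (n + 1))) (by omega)
      have hsup0 : sSup B = 0 := by
        apply Set.Infinite.Nat.sSup_eq_zero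
        apply Set.infinite_of_not_bddAbove hb
      rw [hfwd, hsup0]
      have : 0 < psum η (l + (m + 1)) ω - t := by
        have := psum_strictMono hη ω (by omega : l < l + (m + 1))
        linarith
      linarith


end MarkAux

section Layer3

namespace MarkAux

/-- shifted block sums -/
def Dsum {Ω : Type*} (η : ℕ → Ω → ℝ) (p k : ℕ) (ω : Ω) : ℝ :=
  ∑ i ∈ Finset.range k, η (p + 1 + i) ω

variable {Ω : Type*}

lemma Dsum_succ (η : ℕ → Ω → ℝ) (p k : ℕ) (ω : Ω) :
    Dsum η p (k + 1) ω = Dsum η p k ω + η (p + 1 + k) ω := by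
  simp [Dsum, Finset.sum_range_succ]

lemma psum_add_Dsum (η : ℕ → Ω → ℝ) (p k : ℕ) (ω : Ω) :
    psum η (p + k) ω = psum η p ω + Dsum η p k ω := by
  induction k with
  | zero => simp [Dsum]
  | succ k ih =>
    have h1 : p + (k + 1) = (p + k) + 1 := by omega
    have h2 : p + 1 + k = (p + k) + 1 := by omega
    rw [h1, psum_succ, ih, Dsum_succ, h2]
    ring

lemma Dsum_zero_left (η : ℕ → Ω → ℝ) (k : ℕ) (ω : Ω) :
    Dsum η 0 k ω = psum η k ω := by
  have := psum_add_Dsum η 0 k ω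
  simp only [Nat.zero_add, psum_zero] at this
  linarith

lemma Dsum_mono {η : ℕ → Ω → ℝ} (hη : ∀ i ω, 0 < η i ω) (p : ℕ) {k k' : ℕ}
    (h : k ≤ k') (ω : Ω) : Dsum η p k ω ≤ Dsum η p k' ω := by
  have h1 := psum_add_Dsum η p k ω
  have h2 := psum_add_Dsum η p k' ω
  have := psum_mono hη ω (show p + k ≤ p + k' by omega)
  simp only at this
  linarith

variable [MeasurableSpace Ω] {P : Measure Ω} [IsProbabilityMeasure P]
variable {η ζ : ℕ → Ω → ℝ}

lemma measurable_psum (hm : ∀ i, Measurable (η i)) (k : ℕ) :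
    Measurable fun ω => psum η k ω :=
  Finset.measurable_sum _ fun i _ => hm i

lemma measurable_Dsum (hm : ∀ i, Measurable (η i)) (p k : ℕ) :
    Measurable fun ω => Dsum η p k ω :=
  Finset.measurable_sum _ fun i _ => hm _

/-- the combined family -/
abbrev Fam (η ζ : ℕ → Ω → ℝ) : ℕ ⊕ ℕ → Ω → ℝ :=
  Sum.elim (fun i => η (i + 1)) (fun i => ζ (i + 1))

/-- independence of functions measurable w.r.t. disjoint blocks -/
lemma indepFun_blocks {β γ : Type*} [MeasurableSpace β] [MeasurableSpace γ]
    (hindep : iIndepFun (Fam η ζ) P)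
    (hFmeas : ∀ i, Measurable (Fam η ζ i))
    {S T : Set (ℕ ⊕ ℕ)} (hST : Disjoint S T)
    {U : Ω → β} {V : Ω → γ}
    (hU : Measurable[⨆ i ∈ S, MeasurableSpace.comap (Fam η ζ i) inferInstance] U)
    (hV : Measurable[⨆ i ∈ T, MeasurableSpace.comap (Fam η ζ i) inferInstance] V) :
    IndepFun U V P := by
  have h := indep_iSup_of_disjoint (fun i => (hFmeas i).comap_le)
    ((iIndepFun_iff_iIndep _ _ _).mp hindep) hST
  rw [IndepFun_iff_Indep]
  exact indep_of_indep_of_le_left (indep_of_indep_of_le_right h hV.comap_le) hU.comap_le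

lemma measurable_sup_single {S : Set (ℕ ⊕ ℕ)} {i : ℕ ⊕ ℕ} (hi : i ∈ S) :
    Measurable[⨆ j ∈ S, MeasurableSpace.comap (Fam η ζ j) inferInstance] (Fam η ζ i) :=
  Measurable.of_comap_le (le_iSup₂ (f := fun j (_ : j ∈ S) =>
    MeasurableSpace.comap (Fam η ζ j) inferInstance) i hi)

lemma measurable_sup_Dsum {S : Set (ℕ ⊕ ℕ)} {p k : ℕ}
    (hS : ∀ i, p ≤ i → i < p + k → Sum.inl i ∈ S) :
    Measurable[⨆ j ∈ S, MeasurableSpace.comap (Fam η ζ j) inferInstance]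
      (fun ω => Dsum η p k ω) := by
  apply Finset.measurable_sum
  intro i hi
  have hmem : Sum.inl (p + i) ∈ S := hS _ (by omega) (by
    simp only [Finset.mem_range] at hi; omega)
  have := measurable_sup_single (η := η) (ζ := ζ) hmem
  simpa [Fam, show p + i + 1 = p + 1 + i by omega] using this

lemma measurable_sup_zseq {S : Set (ℕ ⊕ ℕ)}
    (hS : ∀ j, Sum.inr j ∈ S) :
    Measurable[⨆ j ∈ S, MeasurableSpace.comap (Fam η ζ j) inferInstance]
      (fun ω (j : ℕ) => ζ (j + 1) ω) := by
  exact @measurable_pi_lambda _ _ _ (⨆ j ∈ S, MeasurableSpace.comap (Fam η ζ j) inferInstance)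
    _ _ fun j => measurable_sup_single (hS j)

/-- law of the shifted block sum does not depend on the shift -/
lemma map_Dsum_eq
    (hηmeas : ∀ i, Measurable (η i)) (hζmeas : ∀ i, Measurable (ζ i))
    (hindep : iIndepFun (Fam η ζ) P)
    (hηid : ∀ i, 1 ≤ i → IdentDistrib (η i) (η 1) P P) (k : ℕ) :
    ∀ p, Measure.map (fun ω => Dsum η p k ω) P
      = Measure.map (fun ω => Dsum η 0 k ω) P := by
  have hFmeas : ∀ i, Measurable (Fam η ζ i) := by
    rintro (i | i)
    · exact hηmeas (i + 1)
    · exact hζmeas (i + 1)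
  induction k with
  | zero => intro p; rfl
  | succ k ih =>
    intro p
    have key : ∀ q : ℕ, Measure.map (fun ω => Dsum η q (k + 1) ω) P
        = Measure.map (fun x : ℝ × ℝ => x.1 + x.2)
            ((Measure.map (fun ω => Dsum η 0 k ω) P).prod
              (Measure.map (η 1) P)) := by
      intro q
      have hadd : Measurable fun x : ℝ × ℝ => x.1 + x.2 :=
        measurable_fst.add measurable_snd
      have hD : Measurable fun ω => Dsum η q k ω := measurable_Dsum hηmeas q k
      have hη1 : Measurable (η (q + 1 + k)) := hηmeas _
      have hpair : Measurable fun ω => (Dsum η q k ω, η (q + 1 + k) ω) :=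
        hD.prodMk hη1
      have hIndep : IndepFun (fun ω => Dsum η q k ω) (η (q + 1 + k)) P := by
        apply indepFun_blocks hindep hFmeas
          (S := Sum.inl '' {i | i < q + k}) (T := {Sum.inl (q + k)})
        · rw [Set.disjoint_left]
          rintro a ⟨i, hi, rfl⟩ ha
          simp only [Set.mem_singleton_iff, Sum.inl.injEq] at ha
          simp only [Set.mem_setOf_eq] at hi
          omega
        · exact measurable_sup_Dsum (fun i h1 h2 => ⟨i, by simpa using h2, rfl⟩)
        · have := measurable_sup_single (η := η) (ζ := ζ)
            (S := ({Sum.inl (q + k)} : Set (ℕ ⊕ ℕ))) rfl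
          simpa [Fam, show q + k + 1 = q + 1 + k by omega] using this
      have hmapprod : Measure.map (fun ω => (Dsum η q k ω, η (q + 1 + k) ω)) P
          = (Measure.map (fun ω => Dsum η q k ω) P).prod (Measure.map (η (q + 1 + k)) P) :=
        (indepFun_iff_map_prod_eq_prod_map_map hD.aemeasurable hη1.aemeasurable).mp hIndep
      have hcomp : (fun ω => Dsum η q (k + 1) ω)
          = (fun x : ℝ × ℝ => x.1 + x.2) ∘ (fun ω => (Dsum η q k ω, η (q + 1 + k) ω)) := by
        funext ω; simp [Dsum_succ, Function.comp]
      rw [hcomp, ← Measure.map_map hadd hpair, hmapprod, ih q,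
        (hηid (q + 1 + k) (by omega)).map_eq]
    rw [key p, key 0]

/-- the joint law of `(ζ-sequence, block sum)` does not depend on the shift -/
lemma map_pair_eq
    (hηmeas : ∀ i, Measurable (η i)) (hζmeas : ∀ i, Measurable (ζ i))
    (hindep : iIndepFun (Fam η ζ) P)
    (hηid : ∀ i, 1 ≤ i → IdentDistrib (η i) (η 1) P P) (p k : ℕ) :
    Measure.map (fun ω => ((fun j => ζ (j + 1) ω), Dsum η p k ω)) P
      = Measure.map (fun ω => ((fun j => ζ (j + 1) ω), Dsum η 0 k ω)) P := by
  have hFmeas : ∀ i, Measurable (Fam η ζ i) := by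
    rintro (i | i)
    · exact hηmeas (i + 1)
    · exact hζmeas (i + 1)
  have hzm : Measurable fun ω (j : ℕ) => ζ (j + 1) ω :=
    measurable_pi_lambda _ fun j => hζmeas (j + 1)
  have hdisj : Disjoint (Sum.inr '' (Set.univ : Set ℕ)) (Sum.inl '' (Set.univ : Set ℕ)) := by
    rw [Set.disjoint_left]
    rintro a ⟨i, -, rfl⟩ ⟨i', -, h⟩
    exact Sum.inr_ne_inl h.symm
  have hindepPair : ∀ q : ℕ, IndepFun (fun ω (j : ℕ) => ζ (j + 1) ω)
      (fun ω => Dsum η q k ω) P := by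
    intro q
    apply indepFun_blocks hindep hFmeas hdisj
    · exact measurable_sup_zseq (fun j => ⟨j, trivial, rfl⟩)
    · exact measurable_sup_Dsum (fun i _ _ => ⟨i, trivial, rfl⟩)
  have h1 := (indepFun_iff_map_prod_eq_prod_map_map hzm.aemeasurable
    (measurable_Dsum hηmeas p k).aemeasurable).mp (hindepPair p)
  have h2 := (indepFun_iff_map_prod_eq_prod_map_map hzm.aemeasurable
    (measurable_Dsum hηmeas 0 k).aemeasurable).mp (hindepPair 0)
  rw [h1, h2, map_Dsum_eq hηmeas hζmeas hindep hηid k p]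

end MarkAux

end Layer3

section Layer4

namespace MarkAux

variable {Ω : Type*} [MeasurableSpace Ω] {P : Measure Ω} [IsProbabilityMeasure P]
variable {η ζ : ℕ → Ω → ℝ}

/-- the master event set on the auxiliary space -/
def Aset : Set (ℝ × ((ℕ → ℝ) × ℝ)) := {q | Phi q.2.1 q.1 < q.2.2}

set_option maxHeartbeats 1000000 in
lemma measurableSet_Aset : MeasurableSet Aset := by
  have h1 : Measurable fun q : ℝ × ((ℕ → ℝ) × ℝ) => Phi q.2.1 q.1 :=
    measurable_phi.comp ((measurable_fst.comp measurable_snd).prodMk measurable_fst)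
  exact measurableSet_lt h1 (measurable_snd.comp measurable_snd)

lemma event_eq (η ζ : ℕ → Ω → ℝ) (p k : ℕ) :
    {ω | fwdTime ζ (psum η p ω) ω < Dsum η p k ω} =
      (fun ω => (psum η p ω, ((fun j => ζ (j + 1) ω), Dsum η p k ω))) ⁻¹' Aset := by
  ext ω
  simp only [Set.mem_setOf_eq, Set.mem_preimage, Aset, fwdTime_eq]

lemma slice_eq (η ζ : ℕ → Ω → ℝ) (k : ℕ) (t : ℝ) :
    {ω | fwdTime ζ t ω < psum η k ω} =
      (fun ω => ((fun j => ζ (j + 1) ω), psum η k ω)) ⁻¹' (Prod.mk t ⁻¹' Aset) := by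
  ext ω
  simp only [Set.mem_setOf_eq, Set.mem_preimage, Aset, fwdTime_eq]

lemma measurableSet_fwdEvent (hηmeas : ∀ i, Measurable (η i))
    (hζmeas : ∀ i, Measurable (ζ i)) (p k : ℕ) :
    MeasurableSet {ω | fwdTime ζ (psum η p ω) ω < Dsum η p k ω} := by
  rw [event_eq]
  have hzm : Measurable fun ω (j : ℕ) => ζ (j + 1) ω :=
    measurable_pi_lambda _ fun j => hζmeas (j + 1)
  exact ((measurable_psum hηmeas p).prodMk
    (hzm.prodMk (measurable_Dsum hηmeas p k))) measurableSet_Aset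

/-- KEY: uniform control of the probability of the composed event. -/
lemma key_bound (hηmeas : ∀ i, Measurable (η i)) (hζmeas : ∀ i, Measurable (ζ i))
    (hηpos : ∀ i ω, 0 < η i ω)
    (hindep : iIndepFun (Fam η ζ) P)
    (hηid : ∀ i, 1 ≤ i → IdentDistrib (η i) (η 1) P P) (p k : ℕ) (r : ℝ) :
    |(P {ω | fwdTime ζ (psum η p ω) ω < Dsum η p k ω}).toReal - r| ≤
      ⨆ t : Set.Ici (0 : ℝ),
        |(P {ω | fwdTime ζ t.1 ω < psum η k ω}).toReal - r| := by
  set C := ⨆ t : Set.Ici (0 : ℝ),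
      |(P {ω | fwdTime ζ t.1 ω < psum η k ω}).toReal - r| with hC
  have hFmeas : ∀ i, Measurable (Fam η ζ i) := by
    rintro (i | i)
    · exact hηmeas (i + 1)
    · exact hζmeas (i + 1)
  have hzm : Measurable fun ω (j : ℕ) => ζ (j + 1) ω :=
    measurable_pi_lambda _ fun j => hζmeas (j + 1)
  have hT : Measurable fun ω => psum η p ω := measurable_psum hηmeas p
  have hX : Measurable fun ω => ((fun j => ζ (j + 1) ω), Dsum η p k ω) :=
    hzm.prodMk (measurable_Dsum hηmeas p k)
  have hX' : Measurable fun ω => ((fun j => ζ (j + 1) ω), psum η k ω) :=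
    hzm.prodMk (measurable_psum hηmeas k)
  -- independence of the first block and the rest
  have hTX : IndepFun (fun ω => psum η p ω)
      (fun ω => ((fun j => ζ (j + 1) ω), Dsum η p k ω)) P := by
    apply indepFun_blocks hindep hFmeas
      (S := Sum.inl '' {i | i < p})
      (T := (Sum.inl '' {i | p ≤ i}) ∪ (Sum.inr '' Set.univ))
    · rw [Set.disjoint_left]
      rintro a ⟨i, hi, rfl⟩ ha
      simp only [Set.mem_setOf_eq] at hi
      rcases ha with ⟨i', hi', h⟩ | ⟨i', -, h⟩
      · rw [Sum.inl.injEq] at h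
        simp only [Set.mem_setOf_eq] at hi'
        omega
      · exact Sum.inr_ne_inl h
    · have he : (fun ω => psum η p ω) = fun ω => Dsum η 0 p ω := by
        funext ω; exact (Dsum_zero_left η p ω).symm
      rw [he]
      exact measurable_sup_Dsum fun i h1 h2 => ⟨i, by simpa using h2, rfl⟩
    · refine Measurable.prodMk ?_ ?_
      · exact measurable_sup_zseq fun j => Or.inr ⟨j, trivial, rfl⟩
      · exact measurable_sup_Dsum fun i h1 _ => Or.inl ⟨i, h1, rfl⟩
  set ν := Measure.map (fun ω => ((fun j => ζ (j + 1) ω), psum η k ω)) P with hν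
  have hνprob : IsProbabilityMeasure ν := Measure.isProbabilityMeasure_map hX'.aemeasurable
  set μ := Measure.map (fun ω => psum η p ω) P with hμ
  have hμprob : IsProbabilityMeasure μ := Measure.isProbabilityMeasure_map hT.aemeasurable
  -- law of the second factor does not depend on the shift
  have hXX' : Measure.map (fun ω => ((fun j => ζ (j + 1) ω), Dsum η p k ω)) P = ν := by
    rw [hν, map_pair_eq hηmeas hζmeas hindep hηid p k]
    congr 1
    funext ω
    rw [Dsum_zero_left]
  -- disintegration
  have hPE : P {ω | fwdTime ζ (psum η p ω) ω < Dsum η p k ω}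
      = ∫⁻ t, ν (Prod.mk t ⁻¹' Aset) ∂μ := by
    have hpair : Measurable fun ω =>
        (psum η p ω, ((fun j => ζ (j + 1) ω), Dsum η p k ω)) := hT.prodMk hX
    rw [event_eq η ζ p k, ← Measure.map_apply hpair measurableSet_Aset,
      (indepFun_iff_map_prod_eq_prod_map_map hT.aemeasurable hX.aemeasurable).mp hTX,
      hXX', Measure.prod_apply measurableSet_Aset]
  have hq_meas : Measurable fun t => ν (Prod.mk t ⁻¹' Aset) :=
    measurable_measure_prodMk_left measurableSet_Aset
  have hq_le : ∀ t, ν (Prod.mk t ⁻¹' Aset) ≤ 1 := fun t => prob_le_one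
  have hslice : ∀ t : ℝ, (ν (Prod.mk t ⁻¹' Aset)).toReal
      = (P {ω | fwdTime ζ t ω < psum η k ω}).toReal := by
    intro t
    rw [hν, Measure.map_apply hX' (measurable_prodMk_left measurableSet_Aset),
      ← slice_eq η ζ k t]
  have hPEtoReal : (P {ω | fwdTime ζ (psum η p ω) ω < Dsum η p k ω}).toReal
      = ∫ t, (ν (Prod.mk t ⁻¹' Aset)).toReal ∂μ := by
    rw [hPE]
    exact (integral_toReal hq_meas.aemeasurable
      (ae_of_all _ fun t => lt_of_le_of_lt (hq_le t) ENNReal.one_lt_top)).symm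
  have hBdd : BddAbove (Set.range fun t : Set.Ici (0 : ℝ) =>
      |(P {ω | fwdTime ζ t.1 ω < psum η k ω}).toReal - r|) := by
    refine ⟨1 + |r|, ?_⟩
    rintro _ ⟨t, rfl⟩
    have h0 : (P {ω | fwdTime ζ t.1 ω < psum η k ω}).toReal ≤ 1 := by
      simpa using ENNReal.toReal_mono ENNReal.one_ne_top (prob_le_one (μ := P))
    have h1 : 0 ≤ (P {ω | fwdTime ζ t.1 ω < psum η k ω}).toReal := ENNReal.toReal_nonneg
    calc |(P {ω | fwdTime ζ t.1 ω < psum η k ω}).toReal - r|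
        ≤ |(P {ω | fwdTime ζ t.1 ω < psum η k ω}).toReal| + |r| := abs_sub _ _
      _ ≤ 1 + |r| := by rw [abs_of_nonneg h1]; linarith
  have haet : ∀ᵐ t ∂μ, 0 ≤ t := by
    rw [hμ]
    exact (ae_map_iff hT.aemeasurable measurableSet_Ici).mpr
      (ae_of_all _ fun ω => psum_nonneg hηpos p ω)
  have hae : ∀ᵐ t ∂μ, ‖(ν (Prod.mk t ⁻¹' Aset)).toReal - r‖ ≤ C := by
    filter_upwards [haet] with t ht
    rw [Real.norm_eq_abs, hslice]
    exact le_ciSup hBdd (⟨t, Set.mem_Ici.mpr ht⟩ : Set.Ici (0 : ℝ))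
  have hint : Integrable (fun t => (ν (Prod.mk t ⁻¹' Aset)).toReal) μ := by
    apply Integrable.mono' (integrable_const (1 : ℝ))
      hq_meas.ennreal_toReal.aestronglyMeasurable
    refine ae_of_all _ fun t => ?_
    rw [Real.norm_eq_abs, abs_of_nonneg ENNReal.toReal_nonneg]
    simpa using ENNReal.toReal_mono ENNReal.one_ne_top (hq_le t)
  have hsplit : ∫ t, ((ν (Prod.mk t ⁻¹' Aset)).toReal - r) ∂μ
      = (∫ t, (ν (Prod.mk t ⁻¹' Aset)).toReal ∂μ) - r := by
    rw [integral_sub hint (integrable_const r), integral_const]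
    simp
  calc |(P {ω | fwdTime ζ (psum η p ω) ω < Dsum η p k ω}).toReal - r|
      = ‖∫ t, ((ν (Prod.mk t ⁻¹' Aset)).toReal - r) ∂μ‖ := by
        rw [hsplit, ← hPEtoReal, Real.norm_eq_abs]
    _ ≤ C * (μ Set.univ).toReal := norm_integral_le_of_norm_le_const hae
    _ = C := by simp

end MarkAux

end Layer4


/-- If `sup_{t ≥ 0} |P(γ_{n,2}⁺(t) < τ_{n,⌊c_n x⌋}) − G(x)| → 0` at every continuity
point `x > 0` of `G` (where `τ_n` is a sum of i.i.d. copies of `η_{n,1}` independent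
of `Z_n`, since `H_n ⟂ Z_n`), then for every fixed `l` and every continuity point
`x > 0` of `G`, `P(ξ_n(l) ≤ c_n x) → G(x)`. -/
theorem markXi_scaled_cdf_tendsto
    {Ω : Type*} [MeasurableSpace Ω] (P : Measure Ω) [IsProbabilityMeasure P]
    (η ζ : ℕ → ℕ → Ω → ℝ)
    (hηmeas : ∀ n i, Measurable (η n i)) (hζmeas : ∀ n i, Measurable (ζ n i))
    (hηpos : ∀ n i ω, 0 < η n i ω) (hζpos : ∀ n i ω, 0 < ζ n i ω)
    (hindep : ∀ n, iIndepFun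
      (Sum.elim (fun i => η n (i + 1)) (fun i => ζ n (i + 1))) P)
    (hηid : ∀ n i, 1 ≤ i → IdentDistrib (η n i) (η n 1) P P)
    (hζid : ∀ n i, 1 ≤ i → IdentDistrib (ζ n i) (ζ n 1) P P)
    (c : ℕ → ℝ) (hcpos : ∀ n, 0 < c n) (hc : Tendsto c atTop atTop)
    (G : ℝ → ℝ) (hGmono : Monotone G) (hGtop : Tendsto G atTop (nhds 1))
    (h1 : ∀ x > (0 : ℝ), ContinuousAt G x →
      Tendsto (fun n => ⨆ t : Set.Ici (0 : ℝ),
          |(P {ω | fwdTime (ζ n) t.1 ω < psum (η n) ⌊c n * x⌋₊ ω}).toReal - G x|)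
        atTop (nhds 0)) :
    ∀ l : ℕ, ∀ x > (0 : ℝ), ContinuousAt G x →
      Tendsto (fun n => (P {ω | (markXi (η n) (ζ n) l ω : ℝ) ≤ c n * x}).toReal)
        atTop (nhds (G x)) := by
  intro l x hx hcont
  rw [Metric.tendsto_atTop]
  intro ε hε
  set ε' := ε / 8 with hε'def
  have hε'pos : 0 < ε' := by positivity
  have hdense : Dense {y : ℝ | ¬ContinuousAt G y}ᶜ :=
    Set.Countable.dense_compl ℝ hGmono.countable_not_continuousAt
  obtain ⟨δ, hδpos, hδ⟩ := Metric.continuousAt_iff.mp hcont ε' hε'pos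
  -- a continuity point slightly to the left of x
  obtain ⟨xm, hxm_cont, hxm_mem⟩ :
      ∃ y ∈ {y : ℝ | ¬ContinuousAt G y}ᶜ, y ∈ Set.Ioo (max (x / 2) (x - δ / 2)) x := by
    apply hdense.exists_mem_open isOpen_Ioo
    exact Set.nonempty_Ioo.mpr (max_lt (by linarith) (by linarith))
  rw [Set.mem_compl_iff, Set.mem_setOf_eq, not_not] at hxm_cont
  have hxm_pos : 0 < xm :=
    lt_of_lt_of_le (by linarith : (0:ℝ) < x / 2) ((le_max_left _ _).trans hxm_mem.1.le)
  have hxm_lt : xm < x := hxm_mem.2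
  have hGxm : G x - ε' ≤ G xm := by
    have : dist xm x < δ := by
      rw [Real.dist_eq, abs_of_nonpos (by linarith)]
      have := (le_max_right (x / 2) (x - δ / 2)).trans hxm_mem.1.le
      linarith
    have := hδ this
    rw [Real.dist_eq] at this
    have := abs_lt.mp this
    linarith [this.1]
  -- a continuity point slightly to the right of x
  obtain ⟨xp, hxp_cont, hxp_mem⟩ :
      ∃ y ∈ {y : ℝ | ¬ContinuousAt G y}ᶜ, y ∈ Set.Ioo x (x + δ) := by
    apply hdense.exists_mem_open isOpen_Ioo
    exact Set.nonempty_Ioo.mpr (by linarith)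
  rw [Set.mem_compl_iff, Set.mem_setOf_eq, not_not] at hxp_cont
  have hxp_pos : 0 < xp := lt_trans hx hxp_mem.1
  have hxp_gt : x < xp := hxp_mem.1
  have hGxp : G xp ≤ G x + ε' := by
    have : dist xp x < δ := by
      rw [Real.dist_eq, abs_of_nonneg (by linarith [hxp_mem.1])]
      linarith [hxp_mem.2]
    have := hδ this
    rw [Real.dist_eq] at this
    have := abs_lt.mp this
    linarith [this.2]
  -- a large continuity point where G is close to 1
  have hG1 : ∀ᶠ z in atTop, |G z - 1| < ε' := by
    have := Metric.tendsto_nhds.mp hGtop ε' hε'pos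
    simpa [Real.dist_eq] using this
  obtain ⟨Y, hY⟩ := eventually_atTop.mp hG1
  obtain ⟨yc, hyc_cont, hyc_mem⟩ :
      ∃ y ∈ {y : ℝ | ¬ContinuousAt G y}ᶜ, y ∈ Set.Ioo (max Y 0) (max Y 0 + 1) := by
    apply hdense.exists_mem_open isOpen_Ioo
    exact Set.nonempty_Ioo.mpr (by linarith)
  rw [Set.mem_compl_iff, Set.mem_setOf_eq, not_not] at hyc_cont
  have hyc_pos : 0 < yc := lt_of_le_of_lt (le_max_right Y 0) hyc_mem.1
  have hGyc : 1 - ε' ≤ G yc := by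
    have := hY yc ((le_max_left Y 0).trans hyc_mem.1.le)
    have := abs_lt.mp this
    linarith [this.1]
  -- eventual bounds from h1
  have hevm := (h1 xm hxm_pos hxm_cont).eventually_lt_const hε'pos
  have hevp := (h1 xp hxp_pos hxp_cont).eventually_lt_const hε'pos
  have hevy := (h1 yc hyc_pos hyc_cont).eventually_lt_const hε'pos
  -- eventual floor gaps
  have hgap1 : ∀ᶠ n in atTop, ⌊c n * xm⌋₊ + 1 ≤ ⌊c n * x⌋₊ := by
    filter_upwards [hc.eventually_ge_atTop ((x - xm)⁻¹)] with n hn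
    have hcn := hcpos n
    have h1' : 1 ≤ c n * (x - xm) := by
      have hpos : (0:ℝ) < x - xm := by linarith
      calc (1:ℝ) = (x - xm)⁻¹ * (x - xm) := (inv_mul_cancel₀ hpos.ne').symm
        _ ≤ c n * (x - xm) := mul_le_mul_of_nonneg_right hn hpos.le
    apply Nat.le_floor
    push_cast
    have := Nat.floor_le (mul_nonneg (hcpos n).le hxm_pos.le)
    nlinarith
  have hgap2 : ∀ᶠ n in atTop, ⌊c n * x⌋₊ + 1 + 1 ≤ ⌊c n * xp⌋₊ + 1 := by
    filter_upwards [hc.eventually_ge_atTop ((xp - x)⁻¹)] with n hn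
    have hcn := hcpos n
    have h1' : 1 ≤ c n * (xp - x) := by
      have hpos : (0:ℝ) < xp - x := by linarith
      calc (1:ℝ) = (xp - x)⁻¹ * (xp - x) := (inv_mul_cancel₀ hpos.ne').symm
        _ ≤ c n * (xp - x) := mul_le_mul_of_nonneg_right hn hpos.le
    have : ⌊c n * x⌋₊ + 1 ≤ ⌊c n * xp⌋₊ := by
      apply Nat.le_floor
      push_cast
      have := Nat.floor_le (mul_nonneg (hcpos n).le hx.le)
      nlinarith
    omega
  -- main estimate
  have hmain : ∀ᶠ n in atTop,
      dist (P {ω | (markXi (η n) (ζ n) l ω : ℝ) ≤ c n * x}).toReal (G x) < ε := by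
    filter_upwards [hevm, hevp, hevy, hgap1, hgap2] with n hm hp hy hg1 hg2
    set m : ℕ := ⌊c n * x⌋₊ with hmdef
    set mm : ℕ := ⌊c n * xm⌋₊ with hmmdef
    set mp : ℕ := ⌊c n * xp⌋₊ with hmpdef
    set my : ℕ := ⌊c n * yc⌋₊ with hmydef
    have hηp := hηpos n
    have hζp := hζpos n
    have hcx_nonneg : 0 ≤ c n * x := mul_nonneg (hcpos n).le hx.le
    -- LOWER BOUND
    have hsubL : {ω | fwdTime (ζ n) (psum (η n) (l + 1) ω) ω < MarkAux.Dsum (η n) (l + 1) mm ω}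
        ⊆ {ω | (markXi (η n) (ζ n) l ω : ℝ) ≤ c n * x} := by
      intro ω hω
      simp only [Set.mem_setOf_eq] at hω ⊢
      have hfw : fwdTime (ζ n) (psum (η n) (l + 1) ω) ω
          < psum (η n) ((l + 1) + mm) ω - psum (η n) (l + 1) ω := by
        have := MarkAux.psum_add_Dsum (η n) (l + 1) mm ω
        linarith
      have hle : markXi (η n) (ζ n) l ω ≤ m :=
        MarkAux.lower_incl hηp hζp (by omega) hfw
      calc (markXi (η n) (ζ n) l ω : ℝ) ≤ (m : ℝ) := by exact_mod_cast hle
        _ ≤ c n * x := Nat.floor_le hcx_nonneg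
    have hlow : G xm - ε'
        ≤ (P {ω | (markXi (η n) (ζ n) l ω : ℝ) ≤ c n * x}).toReal := by
      have hkey := MarkAux.key_bound (P := P) (hηmeas n) (hζmeas n) (hηpos n)
        (hindep n) (fun i hi => hηid n i hi) (l + 1) mm (G xm)
      have hb : |(P {ω | fwdTime (ζ n) (psum (η n) (l + 1) ω) ω
          < MarkAux.Dsum (η n) (l + 1) mm ω}).toReal - G xm| ≤ ε' :=
        hkey.trans hm.le
      have hmono : (P {ω | fwdTime (ζ n) (psum (η n) (l + 1) ω) ω
            < MarkAux.Dsum (η n) (l + 1) mm ω}).toReal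
          ≤ (P {ω | (markXi (η n) (ζ n) l ω : ℝ) ≤ c n * x}).toReal :=
        ENNReal.toReal_mono (measure_ne_top P _) (measure_mono hsubL)
      have := abs_le.mp hb
      linarith [this.1]
    -- UPPER BOUND
    have hsubU : {ω | (markXi (η n) (ζ n) l ω : ℝ) ≤ c n * x}
        ⊆ {ω | fwdTime (ζ n) (psum (η n) l ω) ω < MarkAux.Dsum (η n) l mp ω}
          ∪ {ω | fwdTime (ζ n) (psum (η n) l ω) ω < MarkAux.Dsum (η n) l my ω}ᶜ := by
      intro ω hω
      simp only [Set.mem_setOf_eq] at hω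
      have hle : markXi (η n) (ζ n) l ω ≤ m := Nat.le_floor hω
      rcases MarkAux.upper_incl hηp hζp hle with h | h
      · left
        simp only [Set.mem_setOf_eq]
        have he : psum (η n) (l + (m + 1)) ω - psum (η n) l ω
            = MarkAux.Dsum (η n) l (m + 1) ω := by
          have := MarkAux.psum_add_Dsum (η n) l (m + 1) ω
          linarith
        rw [he] at h
        exact lt_of_lt_of_le h (MarkAux.Dsum_mono hηp l (by omega) ω)
      · right
        simp only [Set.mem_compl_iff, Set.mem_setOf_eq, not_lt]
        have := h my
        have he : psum (η n) (l + my) ω - psum (η n) l ω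
            = MarkAux.Dsum (η n) l my ω := by
          have := MarkAux.psum_add_Dsum (η n) l my ω
          linarith
        rw [he] at this
        exact this
    have hup : (P {ω | (markXi (η n) (ζ n) l ω : ℝ) ≤ c n * x}).toReal
        ≤ G x + 4 * ε' := by
      have hmeasV : MeasurableSet
          {ω | fwdTime (ζ n) (psum (η n) l ω) ω < MarkAux.Dsum (η n) l my ω} :=
        MarkAux.measurableSet_fwdEvent (hηmeas n) (hζmeas n) l my
      have hPU : P {ω | (markXi (η n) (ζ n) l ω : ℝ) ≤ c n * x}
          ≤ P {ω | fwdTime (ζ n) (psum (η n) l ω) ω < MarkAux.Dsum (η n) l mp ω}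
            + P {ω | fwdTime (ζ n) (psum (η n) l ω) ω < MarkAux.Dsum (η n) l my ω}ᶜ :=
        (measure_mono hsubU).trans (measure_union_le _ _)
      have htR : (P {ω | (markXi (η n) (ζ n) l ω : ℝ) ≤ c n * x}).toReal
          ≤ (P {ω | fwdTime (ζ n) (psum (η n) l ω) ω < MarkAux.Dsum (η n) l mp ω}).toReal
            + (P {ω | fwdTime (ζ n) (psum (η n) l ω) ω < MarkAux.Dsum (η n) l my ω}ᶜ).toReal := by
        have h2 := ENNReal.toReal_mono
          (by finiteness : (P {ω | fwdTime (ζ n) (psum (η n) l ω) ω < MarkAux.Dsum (η n) l mp ω}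
            + P {ω | fwdTime (ζ n) (psum (η n) l ω) ω < MarkAux.Dsum (η n) l my ω}ᶜ) ≠ ⊤) hPU
        rwa [ENNReal.toReal_add (measure_ne_top P _) (measure_ne_top P _)] at h2
      -- bound the first term via key_bound at xp
      have hkeyp := MarkAux.key_bound (P := P) (hηmeas n) (hζmeas n) (hηpos n)
        (hindep n) (fun i hi => hηid n i hi) l mp (G xp)
      have hbp : (P {ω | fwdTime (ζ n) (psum (η n) l ω) ω
          < MarkAux.Dsum (η n) l mp ω}).toReal ≤ G xp + ε' := by
        have := abs_le.mp (hkeyp.trans hp.le)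
        linarith [this.2]
      -- bound the second term via key_bound at yc
      have hkeyy := MarkAux.key_bound (P := P) (hηmeas n) (hζmeas n) (hηpos n)
        (hindep n) (fun i hi => hηid n i hi) l my (G yc)
      have hby : G yc - ε' ≤ (P {ω | fwdTime (ζ n) (psum (η n) l ω) ω
          < MarkAux.Dsum (η n) l my ω}).toReal := by
        have := abs_le.mp (hkeyy.trans hy.le)
        linarith [this.1]
      have hcompl : (P {ω | fwdTime (ζ n) (psum (η n) l ω) ω
          < MarkAux.Dsum (η n) l my ω}ᶜ).toReal
          = 1 - (P {ω | fwdTime (ζ n) (psum (η n) l ω) ω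
            < MarkAux.Dsum (η n) l my ω}).toReal := by
        rw [prob_compl_eq_one_sub hmeasV,
          ENNReal.toReal_sub_of_le prob_le_one ENNReal.one_ne_top]
        simp
      rw [hcompl] at htR
      have : 1 - ε' ≤ G yc := hGyc
      calc (P {ω | (markXi (η n) (ζ n) l ω : ℝ) ≤ c n * x}).toReal
          ≤ (G xp + ε') + (1 - (G yc - ε')) := by linarith
        _ ≤ (G x + ε' + ε') + (ε' + ε') := by linarith
        _ ≤ G x + 4 * ε' := by linarith
    rw [Real.dist_eq]
    have habs : |(P {ω | (markXi (η n) (ζ n) l ω : ℝ) ≤ c n * x}).toReal - G x| ≤ 4 * ε' :=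
      abs_le.mpr ⟨by linarith, by linarith⟩
    have h4 : 4 * ε' < ε := by rw [hε'def]; linarith
    linarith
  obtain ⟨N, hN⟩ := eventually_atTop.mp hmain
  exact ⟨N, hN⟩
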